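/- Let E be a finite-dimensional vector space over a field k with a filtration 0 = F^0 ⊆ F^1 ⊆ ... ⊆ F^ℓ = E by subspaces, let m ≥ 1, and let S ⊆ {1,...,ℓ}^m be downward closed (i.e., if s ∈ S and s' ≤ s componentwise then s' ∈ S). Then the dimension of the subspace H := ∑_{s ∈ S} F^{s_1} ⊗ ... ⊗ F^{s_m} of E^{⊗m} equals ∑_{s ∈ S} ∏_{j=1}^m (dim F^{s_j} − dim F^{s_j − 1}). -/

import Mathlib

open Finset
open scoped TensorProduct

section Aux
variable {k E N : Type*} [Field k] [AddCommGroup E] [Module k E]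
  [AddCommGroup N] [Module k N]

lemma multilinear_aux {m : ℕ} (f : MultilinearMap k (fun _ : Fin m => E) N)
    (R : Fin m → Set E) (A : Finset (Fin m)) :
    ∀ v : Fin m → E, (∀ j ∈ A, v j ∈ Submodule.span k (R j)) → (∀ j ∉ A, v j ∈ R j) →
      f v ∈ Submodule.span k (f '' {w | ∀ j, w j ∈ R j}) := by
  classical
  induction A using Finset.induction with
  | empty =>
    intro v _ hv
    exact Submodule.subset_span ⟨v, fun j => hv j (by simp), rfl⟩
  | @insert a A ha IH =>
    intro v hvA hv
    have hva : v a ∈ Submodule.span k (R a) := hvA a (Finset.mem_insert_self a A)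
    have key : ∀ y ∈ Submodule.span k (R a),
        f (Function.update v a y) ∈ Submodule.span k (f '' {w | ∀ j, w j ∈ R j}) := by
      intro y hy
      induction hy using Submodule.span_induction with
      | mem x hx =>
        apply IH
        · intro j hj
          have hja : j ≠ a := fun h => ha (h ▸ hj)
          rw [Function.update_of_ne hja]
          exact hvA j (Finset.mem_insert_of_mem hj)
        · intro j hj
          by_cases hja : j = a
          · subst hja; simpa using hx
          · rw [Function.update_of_ne hja]
            exact hv j (by simp [Finset.mem_insert, hja, hj])
      | zero =>
        rw [f.map_update_zero]
        exact Submodule.zero_mem _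
      | add x z hx hz ihx ihz =>
        rw [f.map_update_add]
        exact Submodule.add_mem _ ihx ihz
      | smul c x hx ihx =>
        rw [f.map_update_smul]
        exact Submodule.smul_mem _ _ ihx
    have h := key (v a) hva
    rwa [Function.update_eq_self] at h

lemma multilinear_mem_span {m : ℕ} (f : MultilinearMap k (fun _ : Fin m => E) N)
    (R : Fin m → Set E) (v : Fin m → E) (hv : ∀ j, v j ∈ Submodule.span k (R j)) :
    f v ∈ Submodule.span k (f '' {w | ∀ j, w j ∈ R j}) :=
  multilinear_aux f R Finset.univ v (fun j _ => hv j)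
    (fun j hj => absurd (Finset.mem_univ j) hj)

open Classical in
noncomputable def chainB (F : ℕ → Submodule k E) : ℕ → Set E
  | 0 => ∅
  | (i+1) =>
    if h : LinearIndepOn k id (chainB F i) ∧ chainB F i ⊆ ↑(F (i+1))
    then h.1.extend h.2 else ∅

lemma chainB_spec (F : ℕ → Submodule k E) (hF0 : F 0 = ⊥) (hmono : ∀ i, F i ≤ F (i + 1)) :
    ∀ i, (chainB F i ⊆ ↑(F i)) ∧ LinearIndependent k ((↑) : chainB F i → E) ∧
      Submodule.span k (chainB F i) = F i ∧ chainB F i ⊆ chainB F (i+1) := by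
  have main : ∀ i, (chainB F i ⊆ ↑(F i)) ∧ LinearIndependent k ((↑) : chainB F i → E) ∧
      Submodule.span k (chainB F i) = F i := by
    intro i
    induction i with
    | zero =>
      refine ⟨by simp [chainB], ?_, by simp [chainB, hF0]⟩
      exact linearIndependent_empty k E
    | succ i ih =>
      obtain ⟨hsub, hli, hspan⟩ := ih
      have hcond : LinearIndepOn k id (chainB F i) ∧ chainB F i ⊆ ↑(F (i+1)) :=
        ⟨hli, hsub.trans (hmono i)⟩
      have heq : chainB F (i+1) = hcond.1.extend hcond.2 := by
        rw [chainB, dif_pos hcond]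
      rw [heq]
      refine ⟨hcond.1.extend_subset hcond.2, hcond.1.linearIndepOn_extend hcond.2, ?_⟩
      rw [hcond.1.span_extend_eq_span hcond.2, Submodule.span_eq]
  intro i
  obtain ⟨hsub, hli, hspan⟩ := main i
  refine ⟨hsub, hli, hspan, ?_⟩
  have hcond : LinearIndepOn k id (chainB F i) ∧ chainB F i ⊆ ↑(F (i+1)) :=
    ⟨hli, hsub.trans (hmono i)⟩
  have heq : chainB F (i+1) = hcond.1.extend hcond.2 := by
    rw [chainB, dif_pos hcond]
  rw [heq]
  exact hcond.1.subset_extend hcond.2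

end Aux

set_option maxHeartbeats 1000000 in
theorem finrank_sum_product_subspaces (k E : Type*) [Field k] [AddCommGroup E]
    [Module k E] [FiniteDimensional k E]
    (ℓ m : ℕ) (hm : 1 ≤ m)
    (F : ℕ → Submodule k E) (hF0 : F 0 = ⊥) (hFℓ : F ℓ = ⊤)
    (hmono : ∀ i, F i ≤ F (i + 1))
    (S : Finset (Fin m → ℕ))
    (hS : ∀ s ∈ S, ∀ j : Fin m, 1 ≤ s j ∧ s j ≤ ℓ)
    (hdc : ∀ s ∈ S, ∀ s' : Fin m → ℕ, (∀ j, 1 ≤ s' j) → (∀ j, s' j ≤ s j) → s' ∈ S) :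
    Module.finrank k
        ↥(⨆ s ∈ S, Submodule.span k
          {x : ⨂[k] (_i : Fin m), E |
            ∃ v : Fin m → E, (∀ j, v j ∈ F (s j)) ∧
              x = PiTensorProduct.tprod k v})
      = ∑ s ∈ S, ∏ j : Fin m,
          (Module.finrank k (F (s j)) - Module.finrank k (F (s j - 1))) := by
  classical
  have spec := chainB_spec F hF0 hmono
  have Bsub : ∀ i, chainB F i ⊆ ↑(F i) := fun i => (spec i).1
  have Bli : ∀ i, LinearIndependent k ((↑) : chainB F i → E) := fun i => (spec i).2.1
  have Bspan : ∀ i, Submodule.span k (chainB F i) = F i := fun i => (spec i).2.2.1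
  have Bmono : ∀ {i j : ℕ}, i ≤ j → chainB F i ⊆ chainB F j := by
    intro i j hij
    induction hij with
    | refl => exact subset_rfl
    | step h ih => exact ih.trans (spec _).2.2.2
  haveI : Fintype ↥(chainB F ℓ) := ((Bli ℓ).setFinite).fintype
  have hspanBℓ : ⊤ ≤ Submodule.span k (Set.range ((↑) : ↥(chainB F ℓ) → E)) := by
    rw [Subtype.range_coe, Bspan ℓ, hFℓ]
  let b : Module.Basis ↥(chainB F ℓ) k E := Module.Basis.mk (Bli ℓ) hspanBℓ
  have hb : ∀ i : ↥(chainB F ℓ), b i = ↑i := fun i => by simp [b]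
  let lvl : ↥(chainB F ℓ) → ℕ := fun i => sInf {n | (i : E) ∈ chainB F n}
  have hlvl_mem : ∀ i, (i : E) ∈ chainB F (lvl i) := fun i =>
    Nat.sInf_mem (⟨ℓ, i.2⟩ : Set.Nonempty {n | (i : E) ∈ chainB F n})
  have hlvl_le : ∀ (i : ↥(chainB F ℓ)) (n : ℕ), (i : E) ∈ chainB F n → lvl i ≤ n :=
    fun i n h => Nat.sInf_le h
  have hlvl_iff : ∀ (i : ↥(chainB F ℓ)) (n : ℕ), lvl i ≤ n ↔ (i : E) ∈ chainB F n :=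
    fun i n => ⟨fun h => Bmono h (hlvl_mem i), hlvl_le i n⟩
  have hB0 : chainB F 0 = (∅ : Set E) := rfl
  have hlvl_pos : ∀ i, 1 ≤ lvl i := by
    intro i
    by_contra h
    push_neg at h
    have h0 : lvl i ≤ 0 := by omega
    have := (hlvl_iff i 0).1 h0
    rw [hB0] at this
    exact this
  let c : (Fin m → ↥(chainB F ℓ)) → (⨂[k] (_i : Fin m), E) :=
    fun x => PiTensorProduct.tprod k (fun j => b (x j))
  have hc : LinearIndependent k c := by
    rw [linearIndependent_iff']
    intro t g hsum y hy
    let φ : (⨂[k] (_i : Fin m), E) →ₗ[k] k :=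
      PiTensorProduct.lift
        ((MultilinearMap.mkPiAlgebra k (Fin m) k).compLinearMap (fun j => b.coord (y j)))
    have hφ : ∀ x, φ (c x) = if x = y then (1 : k) else 0 := by
      intro x
      have h1 : φ (c x) = ∏ j, b.repr (b (x j)) (y j) := by
        simp [φ, c, MultilinearMap.compLinearMap_apply, MultilinearMap.mkPiAlgebra_apply,
          Module.Basis.coord_apply]
      rw [h1]
      by_cases hxy : x = y
      · subst hxy; simp [Module.Basis.repr_self]
      · rw [if_neg hxy]
        obtain ⟨j, hj⟩ := Function.ne_iff.1 hxy
        exact Finset.prod_eq_zero (Finset.mem_univ j)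
          (by simp [Module.Basis.repr_self, Finsupp.single_apply, hj])
    have h0 := congrArg φ hsum
    rw [map_sum, map_zero] at h0
    simp only [map_smul, hφ, smul_eq_mul, mul_ite, mul_one, mul_zero] at h0
    rwa [Finset.sum_ite_eq' t y g, if_pos hy] at h0
  have cardle : ∀ n, n ≤ ℓ →
      ((univ : Finset ↥(chainB F ℓ)).filter fun i => lvl i ≤ n).card = Module.finrank k (F n) := by
    intro n hn
    haveI : Fintype ↥(chainB F n) := ((Bli n).setFinite).fintype
    have e : {i : ↥(chainB F ℓ) // lvl i ≤ n} ≃ ↥(chainB F n) :=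
      { toFun := fun p => ⟨↑↑p, (hlvl_iff _ _).1 p.2⟩
        invFun := fun q => ⟨⟨↑q, Bmono hn q.2⟩, (hlvl_iff _ _).2 q.2⟩
        left_inv := fun p => Subtype.ext (Subtype.ext rfl)
        right_inv := fun q => Subtype.ext rfl }
    calc ((univ : Finset ↥(chainB F ℓ)).filter fun i => lvl i ≤ n).card
        = Fintype.card {i : ↥(chainB F ℓ) // lvl i ≤ n} := (Fintype.card_subtype _).symm
      _ = Fintype.card ↥(chainB F n) := Fintype.card_congr e
      _ = (chainB F n).toFinset.card := (Set.toFinset_card _).symm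
      _ = Module.finrank k (F n) := by rw [← finrank_span_set_eq_card (Bli n), Bspan n]
  have cardeq : ∀ n, 1 ≤ n → n ≤ ℓ →
      ((univ : Finset ↥(chainB F ℓ)).filter fun i => lvl i = n).card
        = Module.finrank k (F n) - Module.finrank k (F (n - 1)) := by
    intro n h1 h2
    have hsub : ((univ : Finset ↥(chainB F ℓ)).filter fun i => lvl i ≤ n - 1)
        ⊆ ((univ : Finset ↥(chainB F ℓ)).filter fun i => lvl i ≤ n) := by
      intro i hi
      simp only [mem_filter, mem_univ, true_and] at hi ⊢
      omega
    have hdiff : ((univ : Finset ↥(chainB F ℓ)).filter fun i => lvl i = n)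
        = ((univ : Finset ↥(chainB F ℓ)).filter fun i => lvl i ≤ n)
          \ ((univ : Finset ↥(chainB F ℓ)).filter fun i => lvl i ≤ n - 1) := by
      ext i
      simp only [mem_filter, mem_sdiff, mem_univ, true_and]
      omega
    rw [hdiff, Finset.card_sdiff_of_subset hsub, cardle n h2, cardle (n - 1) (by omega)]
  have hspanA : ∀ s : Fin m → ℕ, (∀ j, s j ≤ ℓ) →
      Submodule.span k {x : ⨂[k] (_i : Fin m), E |
        ∃ v : Fin m → E, (∀ j, v j ∈ F (s j)) ∧ x = PiTensorProduct.tprod k v}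
      = Submodule.span k (c '' {x | ∀ j, lvl (x j) ≤ s j}) := by
    intro s hsl
    apply le_antisymm
    · rw [Submodule.span_le]
      rintro _ ⟨v, hvF, rfl⟩
      have hv : ∀ j, v j ∈ Submodule.span k (chainB F (s j)) := fun j => by
        rw [Bspan (s j)]; exact hvF j
      have h := multilinear_mem_span (PiTensorProduct.tprod k) (fun j => chainB F (s j)) v hv
      have hsubset : (⇑(PiTensorProduct.tprod k) '' {w : Fin m → E | ∀ j, w j ∈ chainB F (s j)})
          ⊆ c '' {x | ∀ j, lvl (x j) ≤ s j} := by
        rintro _ ⟨w, hw, rfl⟩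
        refine ⟨fun j => ⟨w j, Bmono (hsl j) (hw j)⟩, fun j => hlvl_le _ _ (hw j), ?_⟩
        exact congrArg (PiTensorProduct.tprod k) (funext fun j => hb _)
      exact SetLike.mem_coe.2 (Submodule.span_mono hsubset h)
    · rw [Submodule.span_le]
      rintro _ ⟨x, hx, rfl⟩
      refine SetLike.mem_coe.2 (Submodule.subset_span ?_)
      refine ⟨fun j => b (x j), fun j => ?_, rfl⟩
      show b (x j) ∈ F (s j)
      rw [hb]
      exact Bsub (s j) (Bmono (hx j) (hlvl_mem (x j)))
  set U : Set (Fin m → ↥(chainB F ℓ)) := {x | (fun j => lvl (x j)) ∈ S} with hUdef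
  have hsupr : (⨆ s ∈ S, Submodule.span k
        {x : ⨂[k] (_i : Fin m), E |
          ∃ v : Fin m → E, (∀ j, v j ∈ F (s j)) ∧ x = PiTensorProduct.tprod k v})
      = Submodule.span k (c '' U) := by
    have h1 : (⨆ s ∈ S, Submodule.span k
        {x : ⨂[k] (_i : Fin m), E |
          ∃ v : Fin m → E, (∀ j, v j ∈ F (s j)) ∧ x = PiTensorProduct.tprod k v})
        = ⨆ s ∈ S, Submodule.span k (c '' {x | ∀ j, lvl (x j) ≤ s j}) :=
      iSup_congr fun s => iSup_congr fun hs => hspanA s (fun j => (hS s hs j).2)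
    have hUeq : (⋃ s ∈ S, {x : Fin m → ↥(chainB F ℓ) | ∀ j, lvl (x j) ≤ s j}) = U := by
      ext x
      simp only [Set.mem_iUnion, Set.mem_setOf_eq, hUdef]
      constructor
      · rintro ⟨s, hs, hx⟩
        exact hdc s hs _ (fun j => hlvl_pos (x j)) hx
      · intro h
        exact ⟨_, h, fun j => le_rfl⟩
    rw [h1, ← Submodule.span_iUnion₂, ← Set.image_iUnion₂, hUeq]
  rw [hsupr]
  haveI : Fintype ↥(c '' U) := (Set.toFinite _).fintype
  have hliU : LinearIndependent k ((↑) : ↥(c '' U) → (⨂[k] (_i : Fin m), E)) :=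
    LinearIndepOn.id_image (v := c) (s := U)
      (hc.comp ((↑) : ↥U → (Fin m → ↥(chainB F ℓ))) Subtype.val_injective)
  rw [finrank_span_set_eq_card hliU, Set.toFinset_image,
    Finset.card_image_of_injective _ hc.injective, Set.toFinset_setOf]
  rw [Finset.card_eq_sum_card_fiberwise
    (f := fun x : Fin m → ↥(chainB F ℓ) => fun j => lvl (x j)) (t := S)
    (s := (univ : Finset (Fin m → ↥(chainB F ℓ))).filter fun x => (fun j => lvl (x j)) ∈ S)
    (fun x hx => Finset.mem_coe.2 (mem_filter.1 hx).2)]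
  refine Finset.sum_congr rfl fun s hs => ?_
  have hfib : (((univ : Finset (Fin m → ↥(chainB F ℓ))).filter
        fun x => (fun j => lvl (x j)) ∈ S).filter fun x => (fun j => lvl (x j)) = s)
      = Fintype.piFinset (fun j => (univ : Finset ↥(chainB F ℓ)).filter fun i => lvl i = s j) := by
    ext x
    simp only [mem_filter, mem_univ, true_and, Fintype.mem_piFinset, funext_iff]
    constructor
    · rintro ⟨-, h⟩; exact h
    · intro h
      exact ⟨by rw [show (fun j => lvl (x j)) = s from funext h]; exact hs, h⟩
  rw [hfib, Fintype.card_piFinset]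
  exact Finset.prod_congr rfl fun j _ => cardeq (s j) (hS s hs j).1 (hS s hs j).2
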